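/- For all integers n ≥ 0 and k ≥ 1, the determinant of the n×n matrix over ℚ with entries binom(i+j+k, i-j+1) for 0 ≤ j ≤ i+1 and 0 for j > i+1, 0 ≤ i, j ≤ n-1, equals C_n^{(k)} = (k/(2n+k))·binom(2n+k, n). -/

import Mathlib

open Finset

/-- `Ck k t` = C_t^{(k)}, coefficient of z^t in c(z)^k, as ballot difference. -/
def Ck (k t : ℕ) : ℚ :=
  (Nat.choose (2*t+k-1) t : ℚ) - if t = 0 then 0 else (Nat.choose (2*t+k-1) (t-1) : ℚ)

lemma Ck_t_zero (k : ℕ) : Ck k 0 = 1 := by simp [Ck]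

lemma Ck_zero_aux (s : ℕ) : Ck 0 (s+1) = 0 := by
  have h : (2*(s+1)+0-1) = 2*s+1 := by omega
  have h2 : Nat.choose (2*s+1) (s+1) = Nat.choose (2*s+1) s := by
    rw [← Nat.choose_symm (by omega)]
    congr 1; omega
  simp only [Ck, h, if_neg (Nat.succ_ne_zero s), Nat.add_sub_cancel, h2, sub_self]

lemma Ck_zero (t : ℕ) (ht : t ≠ 0) : Ck 0 t = 0 := by
  obtain ⟨s, rfl⟩ := Nat.exists_eq_succ_of_ne_zero ht
  exact Ck_zero_aux s

lemma Ck_rec_one (k : ℕ) : Ck (k+1) 1 = Ck k 1 + Ck (k+2) 0 := by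
  have e1 : 2*1+(k+1)-1 = k+2 := by omega
  have e2 : 2*1+k-1 = k+1 := by omega
  simp only [Ck, e1, e2, if_neg (Nat.one_ne_zero), if_pos rfl, Nat.sub_self,
    Nat.choose_one_right, Nat.choose_zero_right]
  push_cast; ring

lemma Ck_rec_two (k r : ℕ) : Ck (k+1) (r+2) = Ck k (r+2) + Ck (k+2) (r+1) := by
  have e1 : 2*(r+2)+(k+1)-1 = 2*r+k+4 := by omega
  have e2 : 2*(r+2)+k-1 = 2*r+k+3 := by omega
  have e3 : 2*(r+1)+(k+2)-1 = 2*r+k+3 := by omega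
  have e4 : r+2-1 = r+1 := by omega
  have e5 : r+1-1 = r := by omega
  have p1 : Nat.choose (2*r+k+4) (r+2) = Nat.choose (2*r+k+3) (r+1) + Nat.choose (2*r+k+3) (r+2) :=
    Nat.choose_succ_succ _ _
  have p2 : Nat.choose (2*r+k+4) (r+1) = Nat.choose (2*r+k+3) r + Nat.choose (2*r+k+3) (r+1) :=
    Nat.choose_succ_succ _ _
  rcases r with _ | m
  · simp only [Ck, e1, e2, e3, e4, e5, if_neg (Nat.succ_ne_zero _), if_pos rfl]
    rw [p1, p2]
    push_cast; ring
  · simp only [Ck, e1, e2, e3, e4, e5, if_neg (Nat.succ_ne_zero _)]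
    rw [p1, p2]
    push_cast; ring

lemma Ck_rec (k t : ℕ) :
    Ck (k+1) t = Ck k t + (if t = 0 then 0 else Ck (k+2) (t-1)) := by
  rcases t with _ | s
  · simp [Ck]
  · rcases s with _ | r
    · simpa using Ck_rec_one k
    · simpa using Ck_rec_two k r

/-- partial sums `G(k,p,q) = Σ_{t=0}^{q} (-1)^t C_t^{(k)} C(p+t, q-t)` -/
def Gs (k p q : ℕ) : ℚ :=
  ∑ t ∈ Finset.range (q+1), (-1:ℚ)^t * Ck k t * (Nat.choose (p+t) (q-t) : ℚ)

lemma Gs_q_zero (k p : ℕ) : Gs k p 0 = 1 := by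
  simp [Gs, Ck_t_zero]

lemma Gs_pascal (k p r : ℕ) : Gs k (p+1) (r+1) = Gs k p (r+1) + Gs k p r := by
  have h : Gs k (p+1) (r+1) - Gs k p (r+1)
      = ∑ t ∈ Finset.range (r+2), (-1:ℚ)^t * Ck k t *
          ((Nat.choose (p+1+t) (r+1-t) : ℚ) - (Nat.choose (p+t) (r+1-t) : ℚ)) := by
    simp only [Gs, ← Finset.sum_sub_distrib]
    exact Finset.sum_congr rfl (fun t _ => by ring)
  rw [Finset.sum_range_succ] at h
  have htop : ((Nat.choose (p+1+(r+1)) (r+1-(r+1)) : ℚ) - (Nat.choose (p+(r+1)) (r+1-(r+1)) : ℚ)) = 0 := by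
    simp
  rw [htop, mul_zero, add_zero] at h
  have h2 : ∀ t ∈ Finset.range (r+1), (-1:ℚ)^t * Ck k t *
        ((Nat.choose (p+1+t) (r+1-t) : ℚ) - (Nat.choose (p+t) (r+1-t) : ℚ))
      = (-1:ℚ)^t * Ck k t * (Nat.choose (p+t) (r-t) : ℚ) := by
    intro t ht
    simp only [Finset.mem_range] at ht
    have e : r+1-t = (r-t)+1 := by omega
    have e2 : p+1+t = (p+t)+1 := by omega
    rw [e, e2, Nat.choose_succ_succ]
    push_cast; ring
  rw [Finset.sum_congr rfl h2] at h
  have : Gs k (p+1) (r+1) - Gs k p (r+1) = Gs k p r := h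
  linarith

/-- diagonal-shift relation: `G(k+1,k+1,q) = G(k,k+1,q) - G(k+2,k+2,q-1)` for q ≥ 1 -/
lemma Gs_diag_rec (k r : ℕ) :
    Gs (k+1) (k+1) (r+1) = Gs k (k+1) (r+1) - Gs (k+2) (k+2) r := by
  have h : Gs (k+1) (k+1) (r+1) - Gs k (k+1) (r+1)
      = ∑ t ∈ Finset.range (r+2), (-1:ℚ)^t *
          (if t = 0 then 0 else Ck (k+2) (t-1)) * (Nat.choose (k+1+t) (r+1-t) : ℚ) := by
    simp only [Gs, ← Finset.sum_sub_distrib]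
    refine Finset.sum_congr rfl (fun t _ => ?_)
    rw [Ck_rec k t]
    push_cast; ring
  rw [Finset.sum_range_succ'] at h
  simp only [if_neg (Nat.succ_ne_zero _), Nat.add_sub_cancel, if_pos rfl] at h
  have h2 : ∀ t ∈ Finset.range (r+1), (-1:ℚ)^(t+1) * Ck (k+2) t * (Nat.choose (k+1+(t+1)) (r+1-(t+1)) : ℚ)
      = -((-1:ℚ)^t * Ck (k+2) t * (Nat.choose ((k+2)+t) (r-t) : ℚ)) := by
    intro t ht
    have e : k+1+(t+1) = (k+2)+t := by omega
    have e2 : r+1-(t+1) = r-t := by omega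
    rw [e, e2]; ring
  rw [Finset.sum_congr rfl h2, Finset.sum_neg_distrib] at h
  have : Gs (k+1) (k+1) (r+1) - Gs k (k+1) (r+1) = -Gs (k+2) (k+2) r := by
    simpa [Gs] using h
  linarith

theorem master : ∀ q k p : ℕ, k ≤ p → Gs k p q = (Nat.choose (p-k) q : ℚ) := by
  intro q
  induction q using Nat.strong_induction_on with
  | _ q IH =>
  rcases q with _ | r
  · intro k p hkp; simp [Gs_q_zero]
  · -- first: the diagonal case
    have hyp : ∀ k' p', k' ≤ p' → Gs k' p' r = (Nat.choose (p'-k') r : ℚ) := IH r (by omega)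
    have diag : ∀ k, Gs k k (r+1) = 0 := by
      intro k
      induction k with
      | zero =>
        have : ∀ t ∈ Finset.range (r+2), (-1:ℚ)^t * Ck 0 t * (Nat.choose (0+t) (r+1-t) : ℚ)
            = if t = 0 then (Nat.choose 0 (r+1) : ℚ) else 0 := by
          intro t ht
          rcases Nat.eq_zero_or_pos t with h0 | h0
          · subst h0; simp [Ck_t_zero]
          · have ht0 : t ≠ 0 := by omega
            rw [Ck_zero t ht0]; simp [ht0]
        rw [Gs, Finset.sum_congr rfl this]
        simp
      | succ k ihk =>
        rw [Gs_diag_rec k r, Gs_pascal k k r]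
        have h1 : Gs k k r = (Nat.choose 0 r : ℚ) := by simpa using hyp k k le_rfl
        have h2 : Gs (k+2) (k+2) r = (Nat.choose 0 r : ℚ) := by simpa using hyp (k+2) (k+2) le_rfl
        rw [h1, h2] at *
        linarith [ihk]
    intro k p hkp
    obtain ⟨d, rfl⟩ : ∃ d, p = k + d := ⟨p - k, by omega⟩
    induction d with
    | zero =>
      have := diag k
      simpa using this
    | succ d ihd =>
      have e : k + (d+1) = (k+d) + 1 := by omega
      rw [e, Gs_pascal k (k+d) r]
      have h1 : Gs k (k+d) (r+1) = (Nat.choose d (r+1) : ℚ) := by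
        simpa using ihd (by omega)
      have h2 : Gs k (k+d) r = (Nat.choose d r : ℚ) := by
        simpa using hyp k (k+d) (by omega)
      rw [h1, h2]
      have hh : (k + d + 1) - k = d + 1 := by omega
      rw [hh, Nat.choose_succ_succ]
      push_cast; ring

/-! ### Matrix part -/

def Ment (k r c : ℕ) : ℚ :=
  if c ≤ r + 1 then (Nat.choose (r + c + k) (r + 1 - c) : ℚ) else 0

def Mmat (k n : ℕ) : Matrix (Fin n) (Fin n) ℚ :=
  Matrix.of fun i j => Ment k i j

def Bmat (k n j : ℕ) : Matrix (Fin n) (Fin n) ℚ :=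
  Matrix.of fun r c => Ment k r (if (c : ℕ) < j then c else (c : ℕ) + 1)

lemma Bmat_eq_Mmat (k n j : ℕ) (h : n ≤ j) : Bmat k n j = Mmat k n := by
  ext r c
  simp [Bmat, Mmat, (by omega : (c : ℕ) < j)]

lemma Ment_superdiag (k r : ℕ) : Ment k r (r + 2) = 0 := by
  simp [Ment]

lemma Ment_one (k r : ℕ) : Ment k r (r + 1) = 1 := by
  simp [Ment]

lemma det_Bmat_step (k n j : ℕ) (h : j ≤ n) :
    (Bmat k (n+1) j).det = (Bmat k n j).det := by
  rw [Matrix.det_succ_column (Bmat k (n+1) j) (Fin.last n)]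
  have hcol : ∀ i : Fin (n+1), Bmat k (n+1) j i (Fin.last n)
      = if (i : ℕ) = n then 1 else 0 := by
    intro i
    have : ((Fin.last n : Fin (n+1)) : ℕ) = n := rfl
    simp only [Bmat, Matrix.of_apply, this]
    rw [if_neg (by omega)]
    rcases Nat.lt_or_ge (i : ℕ) n with hi | hi
    · rw [Ment, if_neg (by omega), if_neg (by omega)]
    · have : (i : ℕ) = n := by omega
      rw [if_pos this, this]
      simpa using Ment_one k n
  rw [Finset.sum_eq_single (Fin.last n)]
  · rw [hcol (Fin.last n)]
    simp only [Fin.val_last, eq_self_iff_true, if_true]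
    have hsign : (-1 : ℚ) ^ (n + n) = 1 := Even.neg_one_pow ⟨n, rfl⟩
    rw [hsign, one_mul, one_mul]
    congr 1
    ext r c
    have h1 : ((Fin.last n).succAbove r : ℕ) = (r : ℕ) := by
      simp [Fin.succAbove_last]
    simp only [Matrix.submatrix_apply, Bmat, Matrix.of_apply, Fin.succAbove_last,
      Fin.coe_castSucc]
  · intro i _ hne
    rw [hcol i, if_neg (by
      intro hh
      exact hne (Fin.ext (by simpa using hh)))]
    ring
  · intro h; exact absurd (Finset.mem_univ _) h

lemma det_Bmat (k : ℕ) : ∀ n j : ℕ, j ≤ n → (Bmat k n j).det = (Mmat k j).det := by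
  intro n
  induction n with
  | zero =>
    intro j hj
    have : j = 0 := by omega
    subst this
    rw [Bmat_eq_Mmat k 0 0 le_rfl]
  | succ n ih =>
    intro j hj
    rcases Nat.lt_or_ge j (n+1) with hlt | hge
    · rw [det_Bmat_step k n j (by omega), ih j (by omega)]
    · have : j = n+1 := by omega
      subst this
      rw [Bmat_eq_Mmat k (n+1) (n+1) le_rfl]

lemma succAbove_val (n : ℕ) (j : Fin (n+1)) (c : Fin n) :
    ((j.succAbove c : Fin (n+1)) : ℕ) = if (c : ℕ) < (j : ℕ) then (c : ℕ) else (c : ℕ) + 1 := by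
  rcases Nat.lt_or_ge (c : ℕ) (j : ℕ) with h | h
  · rw [Fin.succAbove_of_castSucc_lt _ _ (by simpa [Fin.lt_def] using h)]
    simp [h]
  · rw [Fin.succAbove_of_le_castSucc _ _ (by simpa [Fin.le_def] using h)]
    simp [Nat.not_lt.mpr h]

lemma det_Mmat (k : ℕ) : ∀ n, (Mmat k n).det = Ck k n := by
  intro n
  induction n using Nat.strong_induction_on with
  | _ n IH =>
  rcases n with _ | n
  · rw [Matrix.det_fin_zero, Ck_t_zero]
  · rw [Matrix.det_succ_row (Mmat k (n+1)) (Fin.last n)]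
    have hsub : ∀ j : Fin (n+1),
        (Mmat k (n+1)).submatrix (Fin.last n).succAbove j.succAbove = Bmat k n (j : ℕ) := by
      intro j
      ext r c
      simp only [Matrix.submatrix_apply, Mmat, Matrix.of_apply, Bmat, Fin.succAbove_last]
      have h1 : ((Fin.castSucc r : Fin (n+1)) : ℕ) = (r : ℕ) := rfl
      rw [h1, succAbove_val n j c]
    have hterm : ∀ j : Fin (n+1),
        ((Mmat k (n+1)).submatrix (Fin.last n).succAbove j.succAbove).det = Ck k (j : ℕ) := by
      intro j
      rw [hsub j, det_Bmat k n (j : ℕ) (by omega), IH (j : ℕ) (by omega)]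
    have hent : ∀ j : Fin (n+1), Mmat k (n+1) (Fin.last n) j
        = (Nat.choose (n + (j : ℕ) + k) (n + 1 - (j : ℕ)) : ℚ) := by
      intro j
      simp only [Mmat, Matrix.of_apply, Ment, Fin.val_last]
      rw [if_pos (by omega)]
    have hstep : ∑ j : Fin (n+1), (-1:ℚ)^(((Fin.last n : Fin (n+1)) : ℕ) + (j : ℕ)) *
          Mmat k (n+1) (Fin.last n) j *
          ((Mmat k (n+1)).submatrix (Fin.last n).succAbove j.succAbove).det
        = ∑ j ∈ Finset.range (n+1),
            (-1:ℚ)^(n+j) * (Nat.choose (n + j + k) (n + 1 - j) : ℚ) * Ck k j := by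
      rw [← Fin.sum_univ_eq_sum_range
        (fun j => (-1:ℚ)^(n+j) * (Nat.choose (n + j + k) (n + 1 - j) : ℚ) * Ck k j) (n+1)]
      refine Finset.sum_congr rfl (fun j _ => ?_)
      rw [hterm j, hent j, Fin.val_last]
    rw [hstep]
    -- now use the master identity
    have hmaster : Gs k (n+k) (n+1) = 0 := by
      rw [master (n+1) k (n+k) (by omega)]
      rw [show (n+k) - k = n from by omega]
      rw [Nat.choose_eq_zero_of_lt (by omega)]
      simp
    have hsplit : Gs k (n+k) (n+1)
        = (∑ t ∈ Finset.range (n+1), (-1:ℚ)^t * Ck k t * (Nat.choose ((n+k)+t) (n+1-t) : ℚ))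
          + (-1:ℚ)^(n+1) * Ck k (n+1) * (Nat.choose ((n+k)+(n+1)) (n+1-(n+1)) : ℚ) := by
      rw [Gs, Finset.sum_range_succ]
    have htopz : (Nat.choose ((n+k)+(n+1)) (n+1-(n+1)) : ℚ) = 1 := by
      rw [show n+1-(n+1) = 0 from by omega, Nat.choose_zero_right]; norm_num
    rw [htopz, mul_one, hmaster] at hsplit
    have hsum : ∑ t ∈ Finset.range (n+1), (-1:ℚ)^t * Ck k t * (Nat.choose ((n+k)+t) (n+1-t) : ℚ)
        = (-1:ℚ)^n * Ck k (n+1) := by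
      have := hsplit
      rw [pow_succ] at this
      linarith
    calc ∑ j ∈ Finset.range (n+1),
            (-1:ℚ)^(n+j) * (Nat.choose (n + j + k) (n + 1 - j) : ℚ) * Ck k j
        = (-1:ℚ)^n * ∑ t ∈ Finset.range (n+1),
            (-1:ℚ)^t * Ck k t * (Nat.choose ((n+k)+t) (n+1-t) : ℚ) := by
          rw [Finset.mul_sum]
          refine Finset.sum_congr rfl (fun j _ => ?_)
          rw [pow_add, show (n+k)+j = n+j+k from by omega]
          ring
      _ = (-1:ℚ)^n * ((-1:ℚ)^n * Ck k (n+1)) := by rw [hsum]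
      _ = Ck k (n+1) := by
          rw [← mul_assoc, ← pow_add, Even.neg_one_pow ⟨n, rfl⟩, one_mul]

lemma Ck_closed_succ (k m : ℕ) :
    Ck k (m+1) = ((k : ℚ) / ((2 * (m+1) + k : ℕ) : ℚ)) * (Nat.choose (2 * (m+1) + k) (m+1) : ℚ) := by
  set N := 2*m+k+1 with hN
  have e1 : 2*(m+1)+k-1 = N := by omega
  have e2 : 2*(m+1)+k = N+1 := by omega
  have hQ : ((N:ℚ)+1) ≠ 0 := by positivity
  have i : (N+1) * Nat.choose N m = Nat.choose (N+1) (m+1) * (m+1) := Nat.add_one_mul_choose_eq N m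
  have ii : Nat.choose (N+1) (m+1) = Nat.choose N m + Nat.choose N (m+1) := Nat.choose_succ_succ N m
  have iQ : ((N:ℚ)+1) * (Nat.choose N m : ℚ) = (Nat.choose (N+1) (m+1) : ℚ) * ((m:ℚ)+1) := by
    exact_mod_cast i
  have iiQ : (Nat.choose (N+1) (m+1) : ℚ) = (Nat.choose N m : ℚ) + (Nat.choose N (m+1) : ℚ) := by
    exact_mod_cast ii
  have hNQ : (N:ℚ) = 2*(m:ℚ)+(k:ℚ)+1 := by rw [hN]; push_cast; ring
  simp only [Ck, e1, e2, if_neg (Nat.succ_ne_zero m), Nat.add_sub_cancel]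
  have hcast : ((N+1 : ℕ):ℚ) = (N:ℚ)+1 := by push_cast; ring
  rw [hcast, div_mul_eq_mul_div, eq_div_iff hQ]
  linear_combination (-2 : ℚ)*iQ - ((N:ℚ)+1)*iiQ + (Nat.choose (N+1) (m+1) : ℚ)*hNQ

lemma Ck_closed (k n : ℕ) (hk : 1 ≤ k) :
    Ck k n = ((k : ℚ) / ((2 * n + k : ℕ) : ℚ)) * (Nat.choose (2 * n + k) n : ℚ) := by
  rcases n with _ | m
  · have h0 : 2*0+k = k := by omega
    rw [Ck_t_zero, h0, Nat.choose_zero_right]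
    have hkq : (k:ℚ) ≠ 0 := by exact_mod_cast (by omega : k ≠ 0)
    field_simp
    norm_num
  · exact Ck_closed_succ k m

theorem stmt_4 (n k : ℕ) (hk : 1 ≤ k) :
    Matrix.det (Matrix.of fun i j : Fin n =>
        if (j : ℕ) ≤ (i : ℕ) + 1 then
          (Nat.choose ((i : ℕ) + (j : ℕ) + k) ((i : ℕ) + 1 - (j : ℕ)) : ℚ)
        else 0)
      = ((k : ℚ) / ((2 * n + k : ℕ) : ℚ)) * (Nat.choose (2 * n + k) n : ℚ) := by
  have h1 : (Matrix.of fun i j : Fin n =>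
      if (j : ℕ) ≤ (i : ℕ) + 1 then
        (Nat.choose ((i : ℕ) + (j : ℕ) + k) ((i : ℕ) + 1 - (j : ℕ)) : ℚ)
      else 0) = Mmat k n := rfl
  rw [h1, det_Mmat k n, Ck_closed k n hk]
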